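/- Let X be a v-element set and B a family of v blocks such that for every pair of distinct points x, y, the symmetric difference B(x) △ B(y) has size at least m ≥ 1. If s = ⌈2v·log v / m⌉ satisfies s ≤ v, then there exists a subset S ⊆ B of size s intersecting B(x) △ B(y) for every pair of distinct points x, y. -/

import Mathlib

open Finset
open scoped symmDiff

theorem stmt_4 {X : Type*} [Fintype X] [DecidableEq X]
    (v m s : ℕ) (B : Finset (Finset X))
    (hv : Fintype.card X = v) (hv2 : 2 ≤ v) (hBcard : B.card = v) (hm : 1 ≤ m)
    (hdiff : ∀ x y : X, x ≠ y →
      m ≤ ((B.filter (fun C => x ∈ C)) ∆ (B.filter (fun C => y ∈ C))).card)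
    (hs : s = ⌈(2 * (v : ℝ) * Real.log v) / m⌉₊) (hsv : s ≤ v) :
    ∃ S ⊆ B, S.card = s ∧ ∀ x y : X, x ≠ y →
      (S ∩ ((B.filter (fun C => x ∈ C)) ∆ (B.filter (fun C => y ∈ C)))).Nonempty := by
  classical
  have hv0 : 0 < v := by omega
  have hvR : (0:ℝ) < v := by exact_mod_cast hv0
  -- the symmetric difference for a pair
  set D : X × X → Finset (Finset X) :=
    fun p => (B.filter (fun C => p.1 ∈ C)) ∆ (B.filter (fun C => p.2 ∈ C)) with hD
  have hDsub : ∀ p, D p ⊆ B := by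
    intro p
    have h1 : D p ⊆ (B.filter (fun C => p.1 ∈ C)) ∪ (B.filter (fun C => p.2 ∈ C)) :=
      symmDiff_le_sup
    exact h1.trans (union_subset (filter_subset _ _) (filter_subset _ _))
  have hDm : ∀ p : X × X, p.1 ≠ p.2 → m ≤ (D p).card := fun p hp => hdiff p.1 p.2 hp
  -- m ≤ v
  have hmv : m ≤ v := by
    have hcard : 1 < Fintype.card X := by omega
    obtain ⟨x, y, hxy⟩ := Fintype.exists_pair_of_one_lt_card hcard
    calc m ≤ (D (x, y)).card := hDm (x, y) hxy
    _ ≤ B.card := card_le_card (hDsub _)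
    _ = v := hBcard
  set P : Finset (X × X) := Finset.univ.filter (fun p => p.1 ≠ p.2) with hP
  set uncov : Finset (Finset X) → Finset (X × X) :=
    fun S => P.filter (fun p => S ∩ D p = ∅) with huncov
  set q : ℝ := 1 - (m : ℝ) / v with hq
  have hq0 : 0 ≤ q := by
    rw [hq, sub_nonneg, div_le_one hvR]
    exact_mod_cast hmv
  -- greedy induction
  have key : ∀ t : ℕ, ∃ S, S ⊆ B ∧ S.card ≤ t ∧
      ((uncov S).card : ℝ) ≤ (P.card : ℝ) * q ^ t := by
    intro t
    induction t with
    | zero =>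
      refine ⟨∅, empty_subset _, le_refl _, ?_⟩
      have h0 : uncov (∅ : Finset (Finset X)) = P := by
        rw [huncov]
        exact filter_true_of_mem fun p _ => empty_inter (D p)
      rw [h0, pow_zero, mul_one]
    | succ t ih =>
      obtain ⟨S, hSB, hScard, hSbound⟩ := ih
      rcases eq_or_ne (uncov S) ∅ with he | hne
      · refine ⟨S, hSB, hScard.trans (Nat.le_succ t), ?_⟩
        rw [he]
        simp only [card_empty, Nat.cast_zero]
        positivity
      · -- double counting: some block in B \ S covers many pairs
        have hneS : (uncov S).Nonempty := nonempty_iff_ne_empty.mpr hne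
        set Q : ℕ := (uncov S).card with hQ
        have hQpos : 0 < Q := card_pos.mpr hneS
        set f : Finset X → ℕ := fun b => ((uncov S).filter (fun p => b ∈ D p)).card with hf
        have hDpool : ∀ p ∈ uncov S, D p ⊆ B \ S := by
          intro p hp
          rw [huncov, mem_filter] at hp
          refine subset_sdiff.mpr ⟨hDsub p, ?_⟩
          rw [Finset.disjoint_iff_inter_eq_empty, Finset.inter_comm]
          exact hp.2
        have hsum : m * Q ≤ ∑ b ∈ B \ S, f b := by
          have h1 : ∀ b, f b = ∑ p ∈ uncov S, if b ∈ D p then 1 else 0 := by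
            intro b; simp only [hf]; exact card_filter _ _
          calc m * Q = ∑ p ∈ uncov S, m := by rw [sum_const, hQ, smul_eq_mul, mul_comm]
          _ ≤ ∑ p ∈ uncov S, (D p).card := by
              refine sum_le_sum fun p hp => ?_
              have hpP : p ∈ P := mem_of_mem_filter _ hp
              rw [hP, mem_filter] at hpP
              exact hDm p hpP.2
          _ = ∑ p ∈ uncov S, ((B \ S).filter (· ∈ D p)).card := by
              refine sum_congr rfl fun p hp => ?_
              rw [Finset.filter_mem_eq_inter,
                inter_eq_right.mpr (hDpool p hp)]
          _ = ∑ p ∈ uncov S, ∑ b ∈ B \ S, (if b ∈ D p then 1 else 0) := by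
              refine sum_congr rfl fun p _ => ?_
              simp [card_filter]
          _ = ∑ b ∈ B \ S, f b := by
              rw [Finset.sum_comm]
              exact sum_congr rfl fun b _ => (h1 b).symm
        have hpool : (B \ S).card ≤ v := hBcard ▸ card_le_card (sdiff_subset)
        have hpoolne : (B \ S).Nonempty := by
          obtain ⟨p, hp⟩ := hneS
          have hDp : (D p).Nonempty := by
            refine card_pos.mp ?_
            have hpP : p ∈ P := mem_of_mem_filter _ hp
            rw [hP, mem_filter] at hpP
            exact lt_of_lt_of_le hm (hDm p hpP.2)
          obtain ⟨b, hb⟩ := hDp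
          exact ⟨b, hDpool p hp hb⟩
        have hexb : ∃ b ∈ B \ S, m * Q ≤ v * f b := by
          by_contra hcon
          push_neg at hcon
          have h2 : ∑ b ∈ B \ S, v * f b < ∑ _b ∈ B \ S, m * Q :=
            sum_lt_sum_of_nonempty hpoolne fun b hb => hcon b hb
          rw [← Finset.mul_sum, sum_const, smul_eq_mul] at h2
          have h3 : v * (m * Q) ≤ v * ∑ b ∈ B \ S, f b :=
            Nat.mul_le_mul_left v hsum
          have h4 : (B \ S).card * (m * Q) ≤ v * (m * Q) :=
            Nat.mul_le_mul_right _ hpool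
          omega
        obtain ⟨b, hbpool, hbgood⟩ := hexb
        rw [mem_sdiff] at hbpool
        refine ⟨insert b S, insert_subset hbpool.1 hSB, ?_, ?_⟩
        · rw [card_insert_of_notMem hbpool.2]; omega
        · -- the new uncovered set
          have hsub : uncov (insert b S) ⊆ (uncov S).filter (fun p => b ∉ D p) := by
            intro p hp
            rw [huncov, mem_filter] at hp
            have hSsub : S ∩ D p ⊆ insert b S ∩ D p :=
              inter_subset_inter (subset_insert b S) (Finset.Subset.refl _)
            rw [mem_filter, huncov, mem_filter]
            refine ⟨⟨hp.1, subset_empty.mp (hp.2 ▸ hSsub)⟩, fun hbD => ?_⟩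
            have : b ∈ insert b S ∩ D p := mem_inter.mpr ⟨mem_insert_self b S, hbD⟩
            rw [hp.2] at this
            exact notMem_empty b this
          have hcard2 : (uncov (insert b S)).card ≤ Q - f b := by
            calc (uncov (insert b S)).card
                ≤ ((uncov S).filter (fun p => b ∉ D p)).card := card_le_card hsub
            _ = Q - f b := by
                rw [hf, hQ, filter_not, card_sdiff_of_subset (filter_subset _ _)]
          have hfQ : f b ≤ Q := by rw [hf, hQ]; exact card_le_card (filter_subset _ _)
          have hcast : ((uncov (insert b S)).card : ℝ) ≤ (Q : ℝ) - (f b : ℝ) := by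
            have := (Nat.cast_le (α := ℝ)).mpr hcard2
            rwa [Nat.cast_sub hfQ] at this
          have hfb : (m : ℝ) * Q / v ≤ f b := by
            rw [div_le_iff₀ hvR]
            calc (m : ℝ) * Q ≤ (v : ℝ) * f b := by exact_mod_cast hbgood
            _ = (f b : ℝ) * v := mul_comm _ _
          calc ((uncov (insert b S)).card : ℝ) ≤ (Q : ℝ) - (f b : ℝ) := hcast
          _ ≤ (Q : ℝ) - (m : ℝ) * Q / v := by linarith
          _ = (Q : ℝ) * q := by rw [hq]; field_simp
          _ ≤ ((P.card : ℝ) * q ^ t) * q := mul_le_mul_of_nonneg_right hSbound hq0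
          _ = (P.card : ℝ) * q ^ (t + 1) := by ring
  -- numeric bound : P.card * q ^ s < 1
  have hnum : (P.card : ℝ) * q ^ s < 1 := by
    have hsge : 2 * (v : ℝ) * Real.log v / m ≤ s := by
      rw [hs]; exact Nat.le_ceil _
    have hmR : (0:ℝ) < m := by exact_mod_cast hm
    have hlog : 2 * Real.log v ≤ (s : ℝ) * m / v := by
      rw [div_le_iff₀ hmR] at hsge
      rw [le_div_iff₀ hvR]
      calc 2 * Real.log v * v = 2 * v * Real.log v := by ring
      _ ≤ (s : ℝ) * m := hsge
    have hqexp : q ≤ Real.exp (-((m : ℝ) / v)) := by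
      have := Real.add_one_le_exp (-((m : ℝ) / v))
      rw [hq]; linarith
    have hqs : q ^ s ≤ Real.exp (-((s : ℝ) * m / v)) := by
      calc q ^ s ≤ Real.exp (-((m : ℝ) / v)) ^ s := pow_le_pow_left₀ hq0 hqexp s
      _ = Real.exp ((s : ℕ) * (-((m : ℝ) / v))) := (Real.exp_nat_mul _ s).symm
      _ = Real.exp (-((s : ℝ) * m / v)) := by ring_nf
    have hqs2 : q ^ s ≤ 1 / ((v : ℝ) * v) := by
      refine hqs.trans ?_
      have h1 : Real.exp (-((s : ℝ) * m / v)) ≤ Real.exp (-(2 * Real.log v)) :=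
        Real.exp_le_exp.mpr (by linarith)
      refine h1.trans_eq ?_
      rw [Real.exp_neg, two_mul, Real.exp_add, Real.exp_log hvR]
      rw [one_div, mul_comm]
    have hPcard : P.card < v * v := by
      have hXne : Nonempty X := by
        rw [← Fintype.card_pos_iff]; omega
      obtain ⟨x⟩ := hXne
      have hss : P ⊂ Finset.univ := by
        refine ssubset_iff_of_subset (subset_univ _) |>.mpr ⟨(x, x), mem_univ _, ?_⟩
        rw [hP, mem_filter]
        simp
      calc P.card < (Finset.univ : Finset (X × X)).card := card_lt_card hss
      _ = v * v := by rw [card_univ, Fintype.card_prod, hv]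
    have hPR : (P.card : ℝ) ≤ (v : ℝ) * v - 1 := by
      have : (P.card : ℝ) + 1 ≤ (v : ℝ) * v := by exact_mod_cast hPcard
      linarith
    have hvv : (0:ℝ) < (v:ℝ) * v := by positivity
    have hv2R : (2:ℝ) ≤ (v:ℝ) := by exact_mod_cast hv2
    have h0qs : (0:ℝ) ≤ q ^ s := pow_nonneg hq0 s
    have hA : (P.card : ℝ) * q ^ s ≤ ((v:ℝ) * v - 1) * (1 / ((v:ℝ) * v)) :=
      mul_le_mul hPR hqs2 h0qs (by nlinarith)
    have hB : ((v:ℝ) * v - 1) * (1 / ((v:ℝ) * v)) < 1 := by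
      rw [mul_one_div, div_lt_one hvv]; linarith
    linarith
  obtain ⟨S, hSB, hScard, hSbound⟩ := key s
  have hempty : uncov S = ∅ := by
    by_contra hne
    have : 1 ≤ (uncov S).card := card_pos.mpr (nonempty_iff_ne_empty.mpr hne)
    have : (1 : ℝ) ≤ ((uncov S).card : ℝ) := by exact_mod_cast this
    linarith
  obtain ⟨S', hSS', hS'B, hS'card⟩ :=
    Finset.exists_subsuperset_card_eq hSB hScard (hBcard ▸ hsv)
  refine ⟨S', hS'B, hS'card, fun x y hxy => ?_⟩
  have hxyP : (x, y) ∈ P := by rw [hP, mem_filter]; exact ⟨mem_univ _, hxy⟩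
  have hnotun : (x, y) ∉ uncov S := hempty ▸ notMem_empty _
  rw [huncov, mem_filter] at hnotun
  push_neg at hnotun
  have hne := hnotun hxyP
  have hne2 : (S ∩ D (x, y)).Nonempty := hne
  exact hne2.mono (inter_subset_inter hSS' (Finset.Subset.refl _))
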